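/- arXiv:quant-ph/0307130 — 2 statements merged into one kernel-verified Lean document; each statement's English description precedes it below -/
import Mathlib

section
/- In a finite tree, if A is a minimal vertex cover and some connected component of the bipartite graph between A and its complement contains two distinct leaves belonging to A, then two such leaves in A cannot be adjacent to the same vertex of the complement; in particular, distinct leaves of A (with respect to G_AB) have distinct unique neighbors in B = A^c. -/
open scoped Classical

/-- The graph `G_AB` keeping only the edges of `G` between `A` and `B = Aᶜ`. -/
def bipartiteSub {V : Type*} [Fintype V] [DecidableEq V]
    (G : SimpleGraph V) (A : Finset V) : SimpleGraph V where
  Adj u v := G.Adj u v ∧ ((u ∈ A ∧ v ∈ Aᶜ) ∨ (u ∈ Aᶜ ∧ v ∈ A))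
  symm := by
    constructor
    intro u v h
    exact ⟨h.1.symm, h.2.symm.imp And.symm And.symm⟩
  loopless := ⟨fun v h => G.loopless.irrefl v h.1⟩

/-- A vertex cover of `G`. -/
def IsVertexCover {V : Type*} (G : SimpleGraph V) (C : Finset V) : Prop :=
  ∀ u v : V, G.Adj u v → u ∈ C ∨ v ∈ C

/-- In a finite tree, if `A` is a minimal vertex cover and two distinct vertices of `A`
are leaves of the bipartite graph `G_AB` between `A` and `B = Aᶜ` lying in the same
connected component of `G_AB`, then they cannot be adjacent to the same vertex of `B`;
in particular their unique neighbors in `B` are distinct. -/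
theorem tree_min_cover_leaves_distinct_neighbors {V : Type*} [Fintype V] [DecidableEq V]
    (G : SimpleGraph V) (hG : G.IsTree) (A : Finset V)
    (hcov : IsVertexCover G A)
    (hmin : ∀ C : Finset V, IsVertexCover G C → A.card ≤ C.card)
    (a₁ a₂ : V) (ha₁ : a₁ ∈ A) (ha₂ : a₂ ∈ A) (hne : a₁ ≠ a₂)
    (hleaf₁ : ((bipartiteSub G A).neighborSet a₁).ncard = 1)
    (hleaf₂ : ((bipartiteSub G A).neighborSet a₂).ncard = 1)
    (hcomp : (bipartiteSub G A).Reachable a₁ a₂) :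
    ¬ ∃ b ∈ Aᶜ, (bipartiteSub G A).Adj a₁ b ∧ (bipartiteSub G A).Adj a₂ b := by
  rintro ⟨b, hb, h1b, h2b⟩
  have hbA : b ∉ A := by simpa using hb
  -- the neighbor sets are exactly {b}
  obtain ⟨x₁, hx₁⟩ := Set.ncard_eq_one.mp hleaf₁
  have hN1 : (bipartiteSub G A).neighborSet a₁ = {b} := by
    have : b ∈ ({x₁} : Set V) := hx₁ ▸ h1b
    rw [hx₁, Set.mem_singleton_iff.mp this]
  obtain ⟨x₂, hx₂⟩ := Set.ncard_eq_one.mp hleaf₂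
  have hN2 : (bipartiteSub G A).neighborSet a₂ = {b} := by
    have : b ∈ ({x₂} : Set V) := hx₂ ▸ h2b
    rw [hx₂, Set.mem_singleton_iff.mp this]
  -- a₁ and a₂ are not adjacent in G (else a triangle with b)
  have hnadj : ¬ G.Adj a₁ a₂ := by
    intro h12
    have hpu := (SimpleGraph.isAcyclic_iff_path_unique.mp hG.IsAcyclic)
    have hp2 : ((SimpleGraph.Walk.cons h1b.1
        (SimpleGraph.Walk.cons h2b.1.symm SimpleGraph.Walk.nil)) : G.Walk a₁ a₂).IsPath := by
      simp [SimpleGraph.Walk.isPath_def, h1b.ne, h12, h2b.ne.symm]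
      exact fun h => hne h
    have := hpu (SimpleGraph.Path.singleton h12) ⟨_, hp2⟩
    have hlen := congrArg (fun p : G.Path a₁ a₂ => p.1.length) this
    simp [SimpleGraph.Path.singleton] at hlen
  -- build a smaller vertex cover
  set C : Finset V := insert b ((A.erase a₁).erase a₂) with hC
  have hCcov : IsVertexCover G C := by
    intro u v huv
    by_cases hu1 : u = a₁
    · by_cases hvA : v ∈ A
      · by_cases hv2 : v = a₂
        · exact absurd (hu1 ▸ hv2 ▸ huv) hnadj
        · right
          have hv1 : v ≠ a₁ := fun h => huv.ne (hu1.trans h.symm)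
          exact Finset.mem_insert_of_mem (Finset.mem_erase.mpr ⟨hv2,
            Finset.mem_erase.mpr ⟨hv1, hvA⟩⟩)
      · have : v ∈ (bipartiteSub G A).neighborSet a₁ :=
          ⟨hu1 ▸ huv, Or.inl ⟨ha₁, by simpa using hvA⟩⟩
        right
        rw [hN1] at this
        exact (Set.mem_singleton_iff.mp this) ▸ Finset.mem_insert_self b _
    · by_cases hu2 : u = a₂
      · by_cases hvA : v ∈ A
        · by_cases hv1 : v = a₁
          · exact absurd (hu2 ▸ hv1 ▸ huv).symm hnadj
          · right
            have hv2 : v ≠ a₂ := fun h => huv.ne (hu2.trans h.symm)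
            exact Finset.mem_insert_of_mem (Finset.mem_erase.mpr ⟨hv2,
              Finset.mem_erase.mpr ⟨hv1, hvA⟩⟩)
        · have : v ∈ (bipartiteSub G A).neighborSet a₂ :=
            ⟨hu2 ▸ huv, Or.inl ⟨ha₂, by simpa using hvA⟩⟩
          right
          rw [hN2] at this
          exact (Set.mem_singleton_iff.mp this) ▸ Finset.mem_insert_self b _
      · by_cases hv1 : v = a₁
        · by_cases huA : u ∈ A
          · left
            exact Finset.mem_insert_of_mem (Finset.mem_erase.mpr ⟨hu2,
              Finset.mem_erase.mpr ⟨hu1, huA⟩⟩)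
          · have : u ∈ (bipartiteSub G A).neighborSet a₁ :=
              ⟨hv1 ▸ huv.symm, Or.inl ⟨ha₁, by simpa using huA⟩⟩
            left
            rw [hN1] at this
            exact (Set.mem_singleton_iff.mp this) ▸ Finset.mem_insert_self b _
        · by_cases hv2 : v = a₂
          · by_cases huA : u ∈ A
            · left
              exact Finset.mem_insert_of_mem (Finset.mem_erase.mpr ⟨hu2,
                Finset.mem_erase.mpr ⟨hu1, huA⟩⟩)
            · have : u ∈ (bipartiteSub G A).neighborSet a₂ :=
                ⟨hv2 ▸ huv.symm, Or.inl ⟨ha₂, by simpa using huA⟩⟩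
              left
              rw [hN2] at this
              exact (Set.mem_singleton_iff.mp this) ▸ Finset.mem_insert_self b _
          · rcases hcov u v huv with h | h
            · exact Or.inl (Finset.mem_insert_of_mem (Finset.mem_erase.mpr ⟨hu2,
                Finset.mem_erase.mpr ⟨hu1, h⟩⟩))
            · exact Or.inr (Finset.mem_insert_of_mem (Finset.mem_erase.mpr ⟨hv2,
                Finset.mem_erase.mpr ⟨hv1, h⟩⟩))
  have hcard : C.card ≤ A.card - 1 := by
    have h2 : a₂ ∈ A.erase a₁ := Finset.mem_erase.mpr ⟨hne.symm, ha₂⟩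
    have : ((A.erase a₁).erase a₂).card = A.card - 1 - 1 := by
      rw [Finset.card_erase_of_mem h2, Finset.card_erase_of_mem ha₁]
    calc C.card ≤ ((A.erase a₁).erase a₂).card + 1 := Finset.card_insert_le _ _
      _ ≤ A.card - 1 := by
          rw [this]
          have : 2 ≤ A.card := Finset.one_lt_card.mpr ⟨a₁, ha₁, a₂, ha₂, hne⟩
          omega
  have hA2 : 2 ≤ A.card := Finset.one_lt_card.mpr ⟨a₁, ha₁, a₂, ha₂, hne⟩
  have := hmin C hCcov
  omega
end

section
/- For the d-dimensional grid graph on an X × Y × Z box of vertices with X even, the bipartition A consisting of all vertices with even first coordinate satisfies: the bipartite graph G_{A,A^c} of edges between A and A^c is a disjoint union of Y·Z paths, and Γ_{A,A^c} has full column rank |A| = (X/2)·Y·Z over F2. -/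
open scoped Classical

/-- The biadjacency matrix `Γ_{A,Aᶜ}` over `F₂`. -/
noncomputable def gammaAB {V : Type*} [Fintype V] [DecidableEq V]
    (G : SimpleGraph V) (A : Finset V) : Matrix ↥(Aᶜ) ↥A (ZMod 2) :=
  fun b a => if G.Adj (a : V) (b : V) then 1 else 0

/-- The 3D grid (cluster) graph on `{1,…,X} × {1,…,Y} × {1,…,Z}`: vertices are
adjacent iff they differ by 1 in exactly one coordinate. -/
def gridGraph (X Y Z : ℕ) : SimpleGraph (Fin X × Fin Y × Fin Z) :=
  SimpleGraph.fromRel fun u v =>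
    ((u.1 : ℕ) + 1 = (v.1 : ℕ) ∧ u.2 = v.2) ∨
    (u.1 = v.1 ∧ (u.2.1 : ℕ) + 1 = (v.2.1 : ℕ) ∧ u.2.2 = v.2.2) ∨
    (u.1 = v.1 ∧ u.2.1 = v.2.1 ∧ (u.2.2 : ℕ) + 1 = (v.2.2 : ℕ))

namespace GridAux

variable {X Y Z : ℕ}

/-- The canonical choice of `A`. -/
noncomputable abbrev A0 (X Y Z : ℕ) : Finset (Fin X × Fin Y × Fin Z) :=
  Finset.univ.filter (fun v => (v.1 : ℕ) % 2 = 1)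

lemma mem_A0 {u : Fin X × Fin Y × Fin Z} : u ∈ A0 X Y Z ↔ (u.1 : ℕ) % 2 = 1 := by
  simp [A0]

lemma grid_adj_cross {u v : Fin X × Fin Y × Fin Z}
    (h : (u.1 : ℕ) % 2 ≠ (v.1 : ℕ) % 2) :
    (gridGraph X Y Z).Adj u v ↔
      (((u.1 : ℕ) + 1 = (v.1 : ℕ) ∨ (v.1 : ℕ) + 1 = (u.1 : ℕ)) ∧ u.2 = v.2) := by
  rw [gridGraph, SimpleGraph.fromRel_adj]
  constructor
  · rintro ⟨hne, hrel⟩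
    rcases hrel with (h1 | ⟨h1, _⟩ | ⟨h1, _⟩) | (h1 | ⟨h1, _⟩ | ⟨h1, _⟩)
    · exact ⟨Or.inl h1.1, h1.2⟩
    · exact absurd (congrArg (fun t : Fin X => (t : ℕ) % 2) h1) h
    · exact absurd (congrArg (fun t : Fin X => (t : ℕ) % 2) h1) h
    · exact ⟨Or.inr h1.1, h1.2.symm⟩
    · exact absurd (congrArg (fun t : Fin X => (t : ℕ) % 2) h1.symm) h
    · exact absurd (congrArg (fun t : Fin X => (t : ℕ) % 2) h1.symm) h
  · rintro ⟨h1, h2⟩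
    refine ⟨?_, ?_⟩
    · intro he; rw [he] at h1; omega
    · rcases h1 with h1 | h1
      · exact Or.inl (Or.inl ⟨h1, h2⟩)
      · exact Or.inr (Or.inl ⟨h1, h2.symm⟩)

lemma bip_adj {u v : Fin X × Fin Y × Fin Z} :
    (bipartiteSub (gridGraph X Y Z) (A0 X Y Z)).Adj u v ↔
      (((u.1 : ℕ) + 1 = (v.1 : ℕ) ∨ (v.1 : ℕ) + 1 = (u.1 : ℕ)) ∧ u.2 = v.2) := by
  rw [show (bipartiteSub (gridGraph X Y Z) (A0 X Y Z)).Adj u v ↔ ((gridGraph X Y Z).Adj u v ∧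
    ((u ∈ A0 X Y Z ∧ v ∈ (A0 X Y Z)ᶜ) ∨ (u ∈ (A0 X Y Z)ᶜ ∧ v ∈ A0 X Y Z))) from Iff.rfl]
  constructor
  · rintro ⟨hadj, hcross⟩
    have hpar : (u.1 : ℕ) % 2 ≠ (v.1 : ℕ) % 2 := by
      rcases hcross with ⟨h1, h2⟩ | ⟨h1, h2⟩
      · rw [mem_A0] at h1; rw [Finset.mem_compl, mem_A0] at h2; omega
      · rw [Finset.mem_compl, mem_A0] at h1; rw [mem_A0] at h2; omega
    exact (grid_adj_cross hpar).1 hadj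
  · intro h
    have hpar : (u.1 : ℕ) % 2 ≠ (v.1 : ℕ) % 2 := by rcases h.1 with h1 | h1 <;> omega
    refine ⟨(grid_adj_cross hpar).2 h, ?_⟩
    by_cases hu : (u.1 : ℕ) % 2 = 1
    · exact Or.inl ⟨mem_A0.2 hu, Finset.mem_compl.2 (fun hv => by
        rw [mem_A0] at hv; omega)⟩
    · exact Or.inr ⟨Finset.mem_compl.2 (fun hv => by rw [mem_A0] at hv; omega),
        mem_A0.2 (by omega)⟩

end GridAux

namespace GridAux

variable {X Y Z : ℕ}

local notation "Gb" => bipartiteSub (gridGraph X Y Z) (A0 X Y Z)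

lemma degree_le_two (v : Fin X × Fin Y × Fin Z) :
    ((Gb).neighborSet v).ncard ≤ 2 := by
  have h2 : (Set.univ : Set Bool).ncard = 2 := by
    rw [Set.ncard_univ]; simp
  rw [← h2]
  refine Set.ncard_le_ncard_of_injOn
    (fun w => ((w.1 : ℕ) = (v.1 : ℕ) + 1 : Bool)) (fun a _ => trivial) ?_ Set.finite_univ
  intro w hw w' hw' hflag
  rw [SimpleGraph.mem_neighborSet, bip_adj] at hw hw'
  simp only [decide_eq_decide] at hflag
  have hy : w.2 = w'.2 := hw.2.symm.trans hw'.2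
  have hx : (w.1 : ℕ) = (w'.1 : ℕ) := by
    rcases hw.1 with h1 | h1 <;> rcases hw'.1 with h1' | h1' <;> omega
  exact Prod.ext (Fin.ext hx) hy

lemma walk_snd_eq {v w : Fin X × Fin Y × Fin Z} (p : (Gb).Walk v w) : v.2 = w.2 := by
  induction p with
  | nil => rfl
  | cons h _ ih => exact (bip_adj.1 h).2.trans ih

lemma reach_zero (hX0 : 0 < X) (x : Fin X) (p : Fin Y × Fin Z) :
    (Gb).Reachable ((⟨0, hX0⟩ : Fin X), p) (x, p) := by
  have key : ∀ n (hn : n < X), (Gb).Reachable ((⟨0, hX0⟩ : Fin X), p) ((⟨n, hn⟩ : Fin X), p) := by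
    intro n
    induction n with
    | zero => intro hn; rfl
    | succ n ih =>
      intro hn
      refine (ih (by omega)).trans (SimpleGraph.Adj.reachable ?_)
      rw [bip_adj]
      exact ⟨Or.inl rfl, rfl⟩
  have := key x.1 x.2
  simpa using this

lemma card_components (hX0 : 0 < X) :
    Nat.card (Gb).ConnectedComponent = Y * Z := by
  have hbij : Function.Bijective
      (SimpleGraph.ConnectedComponent.lift (G := Gb) (fun v => v.2)
        (fun v w p _ => walk_snd_eq p)) := by
    constructor
    · refine SimpleGraph.ConnectedComponent.ind₂ ?_
      intro v w h
      simp only [SimpleGraph.ConnectedComponent.lift_mk] at h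
      apply SimpleGraph.ConnectedComponent.sound
      have h1 : (Gb).Reachable v ((⟨0, hX0⟩ : Fin X), v.2) :=
        (reach_zero hX0 v.1 v.2).symm
      have h2 : (Gb).Reachable ((⟨0, hX0⟩ : Fin X), w.2) w :=
        reach_zero hX0 w.1 w.2
      rw [h] at h1
      exact h1.trans h2
    · intro p
      exact ⟨SimpleGraph.connectedComponentMk _ ((⟨0, hX0⟩ : Fin X), p), rfl⟩
  rw [Nat.card_eq_of_bijective _ hbij]
  simp [Nat.card_eq_fintype_card]

lemma card_range_odd (n : ℕ) :
    ((Finset.range n).filter (fun k => k % 2 = 1)).card = n / 2 := by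
  induction n with
  | zero => simp
  | succ n ih =>
    rw [Finset.range_add_one, Finset.filter_insert]
    by_cases h : n % 2 = 1
    · rw [if_pos h, Finset.card_insert_of_notMem (by simp), ih]; omega
    · rw [if_neg h, ih]; omega

lemma card_A0 : (A0 X Y Z).card = X / 2 * Y * Z := by
  have hprod : A0 X Y Z =
      (Finset.univ.filter (fun x : Fin X => (x : ℕ) % 2 = 1)) ×ˢ
        (Finset.univ : Finset (Fin Y × Fin Z)) := by
    ext ⟨a, b⟩
    simp [A0, Finset.mem_product]
  have hfin : (Finset.univ.filter (fun x : Fin X => (x : ℕ) % 2 = 1)).card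
      = ((Finset.range X).filter (fun k => k % 2 = 1)).card := by
    refine Finset.card_bij (fun a _ => (a : ℕ)) ?_ ?_ ?_
    · intro a ha
      rw [Finset.mem_filter] at ha
      rw [Finset.mem_filter, Finset.mem_range]
      exact ⟨a.2, ha.2⟩
    · intro a _ b _ h
      exact Fin.ext h
    · intro b hb
      simp only [Finset.mem_filter, Finset.mem_range, Finset.mem_univ, true_and] at hb
      exact ⟨⟨b, hb.1⟩, by simp [hb.2], rfl⟩
  rw [hprod, Finset.card_product, hfin, card_range_odd]
  simp [Fintype.card_prod, mul_assoc]

end GridAux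

namespace GridAux

variable {X Y Z : ℕ}

local notation "Gb" => bipartiteSub (gridGraph X Y Z) (A0 X Y Z)

lemma bip_acyclic : (Gb).IsAcyclic := by
  intro v c hc
  obtain ⟨u, hu, hmax⟩ := Finset.exists_max_image c.support.toFinset
    (fun w => (w.1 : ℕ)) ⟨v, by simp⟩
  rw [List.mem_toFinset] at hu
  have hmax' : ∀ w ∈ c.support, (w.1 : ℕ) ≤ (u.1 : ℕ) := fun w hw =>
    hmax w (List.mem_toFinset.2 hw)
  set c' := c.rotate u hu with hc'def
  have hc' : c'.IsCycle := hc.rotate hu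
  obtain ⟨w, hadj, p, hcons⟩ : ∃ (w : Fin X × Fin Y × Fin Z) (h : (Gb).Adj u w) (p : (Gb).Walk w u),
      c' = SimpleGraph.Walk.cons h p := by
    cases hcase : c' with
    | nil => rw [hcase] at hc'; exact absurd hc' SimpleGraph.Walk.IsCycle.not_of_nil
    | cons h p => exact ⟨_, h, p, rfl⟩
  rw [hcons] at hc'
  rw [SimpleGraph.Walk.cons_isCycle_iff] at hc'
  -- last edge of p
  obtain ⟨w', hadj', q, hcons'⟩ : ∃ (w' : Fin X × Fin Y × Fin Z) (h : (Gb).Adj u w') (q : (Gb).Walk w' w),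
      p.reverse = SimpleGraph.Walk.cons h q := by
    cases hcase : p.reverse with
    | nil => exact absurd rfl hadj.ne
    | cons h q => exact ⟨_, h, q, rfl⟩
  have hedge : s(u, w') ∈ p.edges := by
    have : s(u, w') ∈ p.reverse.edges := by
      rw [hcons']; exact List.mem_cons_self
    rwa [SimpleGraph.Walk.edges_reverse, List.mem_reverse] at this
  have hww' : w ≠ w' := by
    rintro rfl
    exact hc'.2 hedge
  -- membership in c.support
  have hsuptail : w ∈ c.support ∧ w' ∈ c.support := by
    have hperm := SimpleGraph.Walk.support_rotate c u hu
    have hw1 : w ∈ c'.support.tail := by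
      rw [hcons, SimpleGraph.Walk.support_cons]
      exact SimpleGraph.Walk.start_mem_support p
    have hw2 : w' ∈ c'.support.tail := by
      rw [hcons, SimpleGraph.Walk.support_cons]
      have : w' ∈ p.reverse.support := by
        rw [hcons', SimpleGraph.Walk.support_cons]
        exact List.mem_cons_of_mem _ (SimpleGraph.Walk.start_mem_support q)
      rwa [SimpleGraph.Walk.support_reverse, List.mem_reverse] at this
    rw [hc'def] at hw1 hw2
    exact ⟨List.mem_of_mem_tail (hperm.mem_iff.1 hw1),
      List.mem_of_mem_tail (hperm.mem_iff.1 hw2)⟩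
  have h1 := bip_adj.1 hadj
  have h2 := bip_adj.1 hadj'
  have hw := hmax' w hsuptail.1
  have hw'2 := hmax' w' hsuptail.2
  apply hww'
  refine Prod.ext (Fin.ext ?_) (h1.2.symm.trans h2.2)
  rcases h1.1 with ha | ha <;> rcases h2.1 with hb | hb <;> omega

end GridAux

namespace GridAux

variable {X Y Z : ℕ}

lemma rank_full (hX0 : 0 < X) :
    (gammaAB (gridGraph X Y Z) (A0 X Y Z)).rank = (A0 X Y Z).card := by
  set M := gammaAB (gridGraph X Y Z) (A0 X Y Z) with hM
  have hinj : Function.Injective M.mulVecLin := by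
    rw [← LinearMap.ker_eq_bot, LinearMap.ker_eq_bot']
    intro v hv
    have key : ∀ n, ∀ a : ↥(A0 X Y Z), (((a : Fin X × Fin Y × Fin Z).1 : ℕ)) = n → v a = 0 := by
      intro n
      induction n using Nat.strong_induction_on with
      | _ n ih =>
        intro a han
        have hodd : (((a : Fin X × Fin Y × Fin Z).1 : ℕ)) % 2 = 1 := mem_A0.1 a.2
        set x : ℕ := ((a : Fin X × Fin Y × Fin Z).1 : ℕ) with hxdef
        have hx1 : 1 ≤ x := by omega
        have hxlt : x < X := (a : Fin X × Fin Y × Fin Z).1.2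
        set b : Fin X × Fin Y × Fin Z :=
          ((⟨x - 1, by omega⟩ : Fin X), (a : Fin X × Fin Y × Fin Z).2) with hbdef
        have hb : b ∈ (A0 X Y Z)ᶜ := by
          rw [Finset.mem_compl, mem_A0]
          simp only [hbdef]
          omega
        have hrow : ∑ a' : ↥(A0 X Y Z),
            (if (gridGraph X Y Z).Adj (a' : Fin X × Fin Y × Fin Z) b then (1 : ZMod 2) else 0)
              * v a' = 0 := by
          have h0 := congrFun hv ⟨b, hb⟩
          simpa only [Matrix.mulVecLin_apply, Matrix.mulVec, dotProduct, hM, gammaAB,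
            Pi.zero_apply] using h0
        have hadj_iff : ∀ a' : ↥(A0 X Y Z),
            (gridGraph X Y Z).Adj (a' : Fin X × Fin Y × Fin Z) b ↔
              ((a' : Fin X × Fin Y × Fin Z).2 = (a : Fin X × Fin Y × Fin Z).2 ∧
                ((((a' : Fin X × Fin Y × Fin Z).1 : ℕ)) = x ∨
                  (((a' : Fin X × Fin Y × Fin Z).1 : ℕ)) + 2 = x)) := by
          intro a'
          have hodd' : (((a' : Fin X × Fin Y × Fin Z).1 : ℕ)) % 2 = 1 := mem_A0.1 a'.2
          have hpar : (((a' : Fin X × Fin Y × Fin Z).1 : ℕ)) % 2 ≠ ((b.1 : ℕ)) % 2 := by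
            simp only [hbdef]; omega
          rw [grid_adj_cross hpar]
          have hb1 : (b.1 : ℕ) = x - 1 := rfl
          have hb2 : b.2 = (a : Fin X × Fin Y × Fin Z).2 := rfl
          rw [hb1, hb2]
          constructor
          · rintro ⟨h1 | h1, h2⟩
            · exact ⟨h2, Or.inr (by omega)⟩
            · exact ⟨h2, Or.inl (by omega)⟩
          · rintro ⟨h2, h1 | h1⟩
            · exact ⟨Or.inr (by omega), h2⟩
            · exact ⟨Or.inl (by omega), h2⟩
        by_cases hx3 : 3 ≤ x
        · -- two neighbours
          set a₂ : ↥(A0 X Y Z) :=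
            ⟨((⟨x - 2, by omega⟩ : Fin X), (a : Fin X × Fin Y × Fin Z).2),
              mem_A0.2 (by simp only []; omega)⟩ with ha₂def
          have ha₂1 : (((a₂ : Fin X × Fin Y × Fin Z).1 : ℕ)) = x - 2 := rfl
          have ha₂2 : (a₂ : Fin X × Fin Y × Fin Z).2 = (a : Fin X × Fin Y × Fin Z).2 := rfl
          have hne : a ≠ a₂ := by
            intro he
            have := congrArg (fun t : ↥(A0 X Y Z) => (((t : Fin X × Fin Y × Fin Z).1 : ℕ))) he
            simp only [ha₂1] at this
            omega
          have hpoint : ∀ a' : ↥(A0 X Y Z),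
              (if (gridGraph X Y Z).Adj (a' : Fin X × Fin Y × Fin Z) b then (1 : ZMod 2) else 0)
                * v a'
              = (if a' = a then v a' else 0) + (if a' = a₂ then v a' else 0) := by
            intro a'
            by_cases h1 : a' = a
            · rw [if_pos ((hadj_iff a').2 ⟨by rw [h1], Or.inl (by rw [h1])⟩), if_pos h1,
                if_neg (fun h2 => hne (h1 ▸ h2))]
              ring
            · by_cases h2 : a' = a₂
              · rw [if_pos ((hadj_iff a').2 ⟨by rw [h2],
                  Or.inr (by rw [h2]; omega)⟩), if_neg h1, if_pos h2]
                ring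
              · rw [if_neg, if_neg h1, if_neg h2, zero_mul, add_zero]
                intro hadj
                obtain ⟨hs, hv1 | hv1⟩ := (hadj_iff a').1 hadj
                · exact h1 (Subtype.ext (Prod.ext (Fin.ext hv1) hs))
                · exact h2 (Subtype.ext (Prod.ext (Fin.ext (by omega)) hs))
          rw [Finset.sum_congr rfl (fun a' _ => hpoint a'), Finset.sum_add_distrib,
            Finset.sum_ite_eq' Finset.univ a (fun a' => v a'),
            Finset.sum_ite_eq' Finset.univ a₂ (fun a' => v a'),
            if_pos (Finset.mem_univ a), if_pos (Finset.mem_univ a₂)] at hrow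
          have h2 : v a₂ = 0 := ih (x - 2) (by omega) a₂ rfl
          rw [h2, add_zero] at hrow
          exact hrow
        · -- x = 1, single neighbour
          have hx1' : x = 1 := by omega
          have hpoint : ∀ a' : ↥(A0 X Y Z),
              (if (gridGraph X Y Z).Adj (a' : Fin X × Fin Y × Fin Z) b then (1 : ZMod 2) else 0)
                * v a'
              = (if a' = a then v a' else 0) := by
            intro a'
            by_cases h1 : a' = a
            · rw [if_pos ((hadj_iff a').2 ⟨by rw [h1], Or.inl (by rw [h1])⟩), if_pos h1]
              ring
            · rw [if_neg, if_neg h1, zero_mul]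
              intro hadj
              obtain ⟨hs, hv1 | hv1⟩ := (hadj_iff a').1 hadj
              · exact h1 (Subtype.ext (Prod.ext (Fin.ext hv1) hs))
              · omega
          rw [Finset.sum_congr rfl (fun a' _ => hpoint a'),
            Finset.sum_ite_eq' Finset.univ a (fun a' => v a'),
            if_pos (Finset.mem_univ a)] at hrow
          exact hrow
    funext a
    exact key _ a rfl
  have : M.rank = Module.finrank (ZMod 2) (LinearMap.range M.mulVecLin) := rfl
  rw [this, LinearMap.finrank_range_of_inj hinj, Module.finrank_pi, Fintype.card_coe]

end GridAux

open GridAux in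
/-- For the `X × Y × Z` grid graph with `X > 0` even and `A` the set of vertices with
even first coordinate (in 1-based labelling), the bipartite graph `G_{A,Aᶜ}` is a
disjoint union of `Y·Z` paths (it is acyclic, has maximum degree at most `2`, and
exactly `Y·Z` connected components), and `Γ_{A,Aᶜ}` has full column rank
`|A| = (X/2)·Y·Z` over `F₂`. -/
theorem grid_even_slices_full_rank (X Y Z : ℕ) (hX : Even X) (hX0 : 0 < X) :
    ∀ A : Finset (Fin X × Fin Y × Fin Z),
      A = Finset.univ.filter (fun v => (v.1 : ℕ) % 2 = 1) →
      (bipartiteSub (gridGraph X Y Z) A).IsAcyclic ∧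
      (∀ v, ((bipartiteSub (gridGraph X Y Z) A).neighborSet v).ncard ≤ 2) ∧
      Nat.card (bipartiteSub (gridGraph X Y Z) A).ConnectedComponent = Y * Z ∧
      A.card = X / 2 * Y * Z ∧
      (gammaAB (gridGraph X Y Z) A).rank = A.card := by
  intro A hA
  subst hA
  exact ⟨bip_acyclic, degree_le_two, card_components hX0, card_A0, rank_full hX0⟩
end
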